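/- Let $-\xi$ be a subordinator with Laplace exponent $\phi$ and exponential functional $I=\int_0^\zeta e^{\xi_s}ds$, satisfying $\mathbb{E}[I^n]=\prod_{i=1}^n \frac{i}{\phi(i)}$ for all $n\ge 1$. If $\mathbb{E}[I^n]\le c^{-n}$ for all $n\ge 1$ for some $c>0$, and $\phi$ has drift $0$ (i.e. $\phi(\lambda)/\lambda = q/\lambda+\int_0^\infty e^{-\lambda x}\overline\Pi(x)dx \to 0$ as $\lambda\to\infty$), then a contradiction follows; hence the support of $I$ is bounded only if the drift of $-\xi$ is strictly positive. -/

import Mathlib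

open MeasureTheory Filter Real Set
open scoped ENNReal Topology

theorem stmt5 (q c : ℝ) (hq : 0 ≤ q) (hc : 0 < c)
    (Pibar : ℝ → ℝ) (hPibar : ∀ x, 0 ≤ Pibar x)
    (φ : ℝ → ℝ) (hφpos : ∀ lam > (0:ℝ), 0 < φ lam)
    (hφ : ∀ lam > (0:ℝ),
      φ lam / lam = q / lam + ∫ x in Set.Ioi (0:ℝ), Real.exp (-lam * x) * Pibar x)
    (hlim : Tendsto (fun lam => φ lam / lam) atTop (𝓝 0))
    (hmom : ∀ n : ℕ, 1 ≤ n → (∏ i ∈ Finset.Icc 1 n, (i : ℝ) / φ i) ≤ (1/c) ^ n) :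
    False := by
  have hc2 : (0:ℝ) < c / 2 := by positivity
  have hev : ∀ᶠ lam in atTop, φ lam / lam < c / 2 :=
    hlim.eventually_lt_const hc2
  rw [eventually_atTop] at hev
  obtain ⟨M, hM⟩ := hev
  obtain ⟨N0, hN0⟩ := exists_nat_ge M
  set N : ℕ := max N0 1 with hNdef
  have hN1 : 1 ≤ N := le_max_right _ _
  have hNM : M ≤ (N : ℝ) := hN0.trans (by exact_mod_cast le_max_left N0 1)
  -- every factor with index i ≥ N (and i ≥ 1) is > 2/c
  have hfac : ∀ i : ℕ, N ≤ i → (2 / c : ℝ) ≤ (i : ℝ) / φ i := by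
    intro i hi
    have hi1 : 1 ≤ i := hN1.trans hi
    have hipos : (0:ℝ) < i := by exact_mod_cast hi1
    have hφi : 0 < φ i := hφpos i hipos
    have hlt : φ i / i < c / 2 := hM i (hNM.trans (by exact_mod_cast hi))
    have h1 : φ i < c / 2 * i := by
      rw [div_lt_iff₀ hipos] at hlt; linarith
    rw [div_le_div_iff₀ hc hφi]
    nlinarith
  -- K = product up to N, positive
  set K : ℝ := ∏ i ∈ Finset.Icc 1 N, (i : ℝ) / φ i with hK
  have hKpos : 0 < K := by
    apply Finset.prod_pos
    intro i hi
    have hi1 : 1 ≤ i := (Finset.mem_Icc.mp hi).1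
    have hipos : (0:ℝ) < i := by exact_mod_cast hi1
    exact div_pos hipos (hφpos i hipos)
  have hcN : (0:ℝ) < K * c ^ N := by positivity
  obtain ⟨m, hm⟩ := pow_unbounded_of_one_lt (1 / (K * c ^ N)) (by norm_num : (1:ℝ) < 2)
  have hm' : 1 < K * c ^ N * 2 ^ m := by
    rw [div_lt_iff₀ hcN] at hm
    nlinarith [pow_pos (show (0:ℝ) < 2 by norm_num) m]
  set n : ℕ := N + m with hn
  have hmom' := hmom n (hN1.trans (Nat.le_add_right N m))
  -- lower bound for the product
  have hsplit : (∏ i ∈ Finset.Icc 1 n, (i : ℝ) / φ i)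
      = K * ∏ i ∈ Finset.Ioc N n, (i : ℝ) / φ i := by
    rw [hK, show Finset.Icc 1 N = Finset.Ioc 0 N by rfl,
      show Finset.Icc 1 n = Finset.Ioc 0 n by rfl]
    rw [← Finset.prod_Ioc_consecutive _ (Nat.zero_le N) (Nat.le_add_right N m)]
  have htail : (2 / c : ℝ) ^ m ≤ ∏ i ∈ Finset.Ioc N n, (i : ℝ) / φ i := by
    have hcard : (Finset.Ioc N n).card = m := by
      rw [Nat.card_Ioc]; omega
    calc (2 / c : ℝ) ^ m = ∏ _i ∈ Finset.Ioc N n, (2 / c : ℝ) := by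
          rw [Finset.prod_const, hcard]
      _ ≤ _ := by
          apply Finset.prod_le_prod
          · intro i _; positivity
          · intro i hi; exact hfac i (Finset.mem_Ioc.mp hi).1.le
  have hlow : K * (2 / c) ^ m ≤ (1 / c) ^ n := by
    calc K * (2 / c) ^ m ≤ K * ∏ i ∈ Finset.Ioc N n, (i : ℝ) / φ i :=
          mul_le_mul_of_nonneg_left htail hKpos.le
      _ = ∏ i ∈ Finset.Icc 1 n, (i : ℝ) / φ i := hsplit.symm
      _ ≤ (1 / c) ^ n := hmom'
  -- but K * (2/c)^m > (1/c)^n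
  have hgt : (1 / c : ℝ) ^ n < K * (2 / c) ^ m := by
    have hp : (0:ℝ) < (1 / c) ^ m := by positivity
    have h1 : ((1:ℝ) / c) ^ N < K * 2 ^ m := by
      rw [div_pow, one_pow, div_lt_iff₀ (pow_pos hc N)]
      nlinarith [pow_pos hc N, pow_pos (show (0:ℝ) < 2 by norm_num) m]
    calc (1 / c : ℝ) ^ n = (1 / c) ^ N * (1 / c) ^ m := by rw [hn, pow_add]
      _ < (K * 2 ^ m) * (1 / c) ^ m := mul_lt_mul_of_pos_right h1 hp
      _ = K * (2 / c) ^ m := by rw [div_pow, div_pow, one_pow]; ring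
  exact absurd hlow (not_le.mpr hgt)
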